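/- Let d ≥ 1 be an integer with prime factorization d = ∏ p_i^{α_i}, and let N_0 = max_i p_i^{α_i}. Then I_{d,N} = 1 if and only if N ≥ N_0, where I_{d,N} = gcd { d/δ : δ ∈ {1,…,N}, δ ∣ d }. -/

import Mathlib

/-- `I_{d,N} = gcd { d/δ : δ ∈ {1,…,N}, δ ∣ d }`. -/
def Idn (d N : ℕ) : ℕ :=
  Finset.gcd ((Finset.Icc 1 N).filter (fun δ => δ ∣ d)) (fun δ => d / δ)

/-- Let `d ≥ 1` with prime factorization `d = ∏ p^{α_p}` and let
`N₀ = max_p p^{α_p}` (the largest prime power appearing in `d`).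
Then `I_{d,N} = 1` if and only if `N ≥ N₀`. -/
theorem Idn_eq_one_iff (d N : ℕ) (hd : 1 ≤ d) (hN : 1 ≤ N) :
    Idn d N = 1 ↔ d.primeFactors.sup (fun p => p ^ d.factorization p) ≤ N := by
  have hd0 : d ≠ 0 := by omega
  have h1mem : (1 : ℕ) ∈ (Finset.Icc 1 N).filter (fun δ => δ ∣ d) := by
    simp [Finset.mem_Icc, hN]
  have hIdvd : Idn d N ∣ d := by
    have h := Finset.gcd_dvd (f := fun δ => d / δ) h1mem
    simpa [Idn] using h
  constructor
  · intro h1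
    rw [Finset.sup_le_iff]
    intro p hp
    by_contra hlt
    push_neg at hlt
    have hpp : p.Prime := Nat.prime_of_mem_primeFactors hp
    have hpI : p ∣ Idn d N := by
      apply Finset.dvd_gcd
      intro δ hδ
      simp only [Finset.mem_filter, Finset.mem_Icc] at hδ
      obtain ⟨⟨hδ1, hδN⟩, hδd⟩ := hδ
      have hδ0 : δ ≠ 0 := by omega
      have hvalt : δ.factorization p < d.factorization p := by
        by_contra hge
        push_neg at hge
        have hdvd : p ^ d.factorization p ∣ δ :=
          (pow_dvd_pow p hge).trans (Nat.ordProj_dvd δ p)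
        have := Nat.le_of_dvd (by omega) hdvd
        omega
      have hq0 : d / δ ≠ 0 := by
        have := Nat.le_of_dvd (by omega) hδd
        exact Nat.div_ne_zero_iff.mpr ⟨hδ0, this⟩
      rw [hpp.dvd_iff_one_le_factorization hq0, Nat.factorization_div hδd]
      simp only [Finsupp.coe_tsub, Pi.sub_apply]
      omega
    rw [h1] at hpI
    exact hpp.one_lt.ne' (Nat.dvd_one.mp hpI)
  · intro hsup
    by_contra hne
    obtain ⟨p, hpp, hpI⟩ := Nat.exists_prime_and_dvd hne
    have hpd : p ∣ d := hpI.trans hIdvd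
    have hpmem : p ∈ d.primeFactors := Nat.mem_primeFactors.mpr ⟨hpp, hpd, hd0⟩
    have hle : p ^ d.factorization p ≤ N :=
      le_trans (Finset.le_sup (f := fun p => p ^ d.factorization p) hpmem) hsup
    have hmem : p ^ d.factorization p ∈ (Finset.Icc 1 N).filter (fun δ => δ ∣ d) := by
      simp only [Finset.mem_filter, Finset.mem_Icc]
      exact ⟨⟨Nat.one_le_pow _ _ hpp.pos, hle⟩, Nat.ordProj_dvd d p⟩
    have h2 : Idn d N ∣ d / p ^ d.factorization p := Finset.gcd_dvd hmem
    exact Nat.not_dvd_ordCompl hpp hd0 (hpI.trans h2)
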